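/- In the monoid M′₆ presented by generators a, b, c, d, e, f and relations abf = bfa = fab, bcd = cdb = dbc, def = efd = fde, ad = da, cf = fc, be = eb, abce = eabc, cdea = acde, the equality d·b·c·e·f·a = d·b·e·f·a·c holds, but c·e·f·a ≠ e·f·a·c; consequently M′₆ is not cancellative. -/
import Mathlib


/-- The six generators of the monoid `M′₆`. -/
inductive L6 : Type
  | a | b | c | d | e | f

open FreeMonoid

/-- The defining relations of `M′₆`:
`abf = bfa = fab`, `bcd = cdb = dbc`, `def = efd = fde`,
`ad = da`, `cf = fc`, `be = eb`, `abce = eabc`, `cdea = acde`. -/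
inductive R6' : FreeMonoid L6 → FreeMonoid L6 → Prop
  | abf₁ : R6' (of L6.a * of L6.b * of L6.f) (of L6.b * of L6.f * of L6.a)
  | abf₂ : R6' (of L6.a * of L6.b * of L6.f) (of L6.f * of L6.a * of L6.b)
  | bcd₁ : R6' (of L6.b * of L6.c * of L6.d) (of L6.c * of L6.d * of L6.b)
  | bcd₂ : R6' (of L6.b * of L6.c * of L6.d) (of L6.d * of L6.b * of L6.c)
  | def₁ : R6' (of L6.d * of L6.e * of L6.f) (of L6.e * of L6.f * of L6.d)
  | def₂ : R6' (of L6.d * of L6.e * of L6.f) (of L6.f * of L6.d * of L6.e)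
  | ad : R6' (of L6.a * of L6.d) (of L6.d * of L6.a)
  | cf : R6' (of L6.c * of L6.f) (of L6.f * of L6.c)
  | be : R6' (of L6.b * of L6.e) (of L6.e * of L6.b)
  | abce : R6' (of L6.a * of L6.b * of L6.c * of L6.e)
      (of L6.e * of L6.a * of L6.b * of L6.c)
  | cdea : R6' (of L6.c * of L6.d * of L6.e * of L6.a)
      (of L6.a * of L6.c * of L6.d * of L6.e)

/-- The monoid `M′₆` presented by the generators `a, …, f` and the relations `R6'`. -/
abbrev M6' : Type := PresentedMonoid R6'

/-- The image of a generator in `M′₆`. -/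
def g (x : L6) : M6' := PresentedMonoid.of R6' x


namespace M6'helper

open PresentedMonoid

/-- A 3-point transformation model of the relations. -/
def fM : L6 → Function.End (Fin 3)
  | L6.a => ![0, 0, 1]
  | L6.b => ![0, 0, 1]
  | L6.c => ![0, 1, 0]
  | L6.d => ![0, 0, 1]
  | L6.e => ![0, 1, 2]
  | L6.f => ![0, 1, 2]

lemma fM_resp : ∀ x y : FreeMonoid L6, R6' x y →
    FreeMonoid.lift fM x = FreeMonoid.lift fM y := by
  intro x y h
  cases h <;>
  · simp only [map_mul, FreeMonoid.lift_eval_of]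
    funext i
    fin_cases i <;> rfl

/-- The induced homomorphism `M6' →* Function.End (Fin 3)`. -/
def phi : M6' →* Function.End (Fin 3) := PresentedMonoid.lift fM fM_resp

lemma rel_eq {x y : FreeMonoid L6} (h : R6' x y) : mk R6' x = mk R6' y :=
  Quotient.sound (ConGen.Rel.of _ _ h)

lemma step {x y : FreeMonoid L6} (u v : FreeMonoid L6)
    (h : mk R6' x = mk R6' y) :
    mk R6' (u * x * v) = mk R6' (u * y * v) := by
  rw [map_mul, map_mul, h, ← map_mul, ← map_mul]

end M6'helper

set_option maxHeartbeats 2000000 in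
/-- In `M′₆`, the equality `d·b·c·e·f·a = d·b·e·f·a·c` holds but `c·e·f·a ≠ e·f·a·c`;
consequently `M′₆` is not cancellative. -/
theorem M6'_not_cancellative :
    (g L6.d * g L6.b * g L6.c * g L6.e * g L6.f * g L6.a =
      g L6.d * g L6.b * g L6.e * g L6.f * g L6.a * g L6.c) ∧
    (g L6.c * g L6.e * g L6.f * g L6.a ≠ g L6.e * g L6.f * g L6.a * g L6.c) ∧
    ¬ (∀ A X Y B : M6', A * X * B = A * Y * B → X = Y) := by
  open M6'helper PresentedMonoid in
  have key : g L6.d * g L6.b * g L6.c * g L6.e * g L6.f * g L6.a =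
      g L6.d * g L6.b * g L6.e * g L6.f * g L6.a * g L6.c := by
    show mk R6' (.of L6.d) * mk R6' (.of L6.b) * mk R6' (.of L6.c) * mk R6' (.of L6.e) *
        mk R6' (.of L6.f) * mk R6' (.of L6.a) = mk R6' (.of L6.d) * mk R6' (.of L6.b) *
        mk R6' (.of L6.e) * mk R6' (.of L6.f) * mk R6' (.of L6.a) * mk R6' (.of L6.c)
    simp only [← map_mul]
    calc mk R6' (of L6.d * of L6.b * of L6.c * of L6.e * of L6.f * of L6.a)
      _ = mk R6' ((1 : FreeMonoid L6) * (of L6.b * of L6.c * of L6.d) * (of L6.e * of L6.f * of L6.a)) := step (1 : FreeMonoid L6) (of L6.e * of L6.f * of L6.a) (rel_eq R6'.bcd₂).symm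
      _ = mk R6' ((1 : FreeMonoid L6) * (of L6.c * of L6.d * of L6.b) * (of L6.e * of L6.f * of L6.a)) := step (1 : FreeMonoid L6) (of L6.e * of L6.f * of L6.a) (rel_eq R6'.bcd₁)
      _ = mk R6' ((of L6.c * of L6.d) * (of L6.e * of L6.b) * (of L6.f * of L6.a)) := step (of L6.c * of L6.d) (of L6.f * of L6.a) (rel_eq R6'.be)
      _ = mk R6' ((of L6.c * of L6.d * of L6.e) * (of L6.a * of L6.b * of L6.f) * (1 : FreeMonoid L6)) := step (of L6.c * of L6.d * of L6.e) (1 : FreeMonoid L6) (rel_eq R6'.abf₁).symm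
      _ = mk R6' ((1 : FreeMonoid L6) * (of L6.a * of L6.c * of L6.d * of L6.e) * (of L6.b * of L6.f)) := step (1 : FreeMonoid L6) (of L6.b * of L6.f) (rel_eq R6'.cdea)
      _ = mk R6' ((of L6.a * of L6.c * of L6.d) * (of L6.b * of L6.e) * (of L6.f)) := step (of L6.a * of L6.c * of L6.d) (of L6.f) (rel_eq R6'.be).symm
      _ = mk R6' ((of L6.a) * (of L6.b * of L6.c * of L6.d) * (of L6.e * of L6.f)) := step (of L6.a) (of L6.e * of L6.f) (rel_eq R6'.bcd₁).symm
      _ = mk R6' ((of L6.a) * (of L6.d * of L6.b * of L6.c) * (of L6.e * of L6.f)) := step (of L6.a) (of L6.e * of L6.f) (rel_eq R6'.bcd₂)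
      _ = mk R6' ((1 : FreeMonoid L6) * (of L6.d * of L6.a) * (of L6.b * of L6.c * of L6.e * of L6.f)) := step (1 : FreeMonoid L6) (of L6.b * of L6.c * of L6.e * of L6.f) (rel_eq R6'.ad)
      _ = mk R6' ((of L6.d) * (of L6.e * of L6.a * of L6.b * of L6.c) * (of L6.f)) := step (of L6.d) (of L6.f) (rel_eq R6'.abce)
      _ = mk R6' ((of L6.d * of L6.e * of L6.a * of L6.b) * (of L6.f * of L6.c) * (1 : FreeMonoid L6)) := step (of L6.d * of L6.e * of L6.a * of L6.b) (1 : FreeMonoid L6) (rel_eq R6'.cf)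
      _ = mk R6' ((of L6.d * of L6.e) * (of L6.b * of L6.f * of L6.a) * (of L6.c)) := step (of L6.d * of L6.e) (of L6.c) (rel_eq R6'.abf₁)
      _ = mk R6' ((of L6.d) * (of L6.b * of L6.e) * (of L6.f * of L6.a * of L6.c)) := step (of L6.d) (of L6.f * of L6.a * of L6.c) (rel_eq R6'.be).symm
  have ne : g L6.c * g L6.e * g L6.f * g L6.a ≠ g L6.e * g L6.f * g L6.a * g L6.c := by
    intro h
    have h2 := congrArg phi h
    simp only [map_mul] at h2
    have h3 : (fM L6.c * fM L6.e * fM L6.f * fM L6.a) =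
        (fM L6.e * fM L6.f * fM L6.a * fM L6.c) := h2
    exact absurd (congrFun h3 2) (by decide)
  refine ⟨key, ne, fun H => ne ?_⟩
  apply H (g L6.d * g L6.b) _ _ 1
  rw [mul_one, mul_one]
  calc g L6.d * g L6.b * (g L6.c * g L6.e * g L6.f * g L6.a)
      = g L6.d * g L6.b * g L6.c * g L6.e * g L6.f * g L6.a := by
        simp [mul_assoc]
    _ = g L6.d * g L6.b * g L6.e * g L6.f * g L6.a * g L6.c := key
    _ = g L6.d * g L6.b * (g L6.e * g L6.f * g L6.a * g L6.c) := by
        simp [mul_assoc]
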